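/- arXiv:1203.4069 — 4 statements merged into one kernel-verified Lean document; each statement's English description precedes it below -/
import Mathlib

section
/- For all integers k ≥ 1 and p ≥ 0, the number of lattice points x ∈ ℤ^k with |2x₁ − 1| + Σ_{i=2}^{k} 2|x_i| ≤ 2p+1 (i.e. the lattice points in a closed L¹-ball of radius p + 1/2 centered at the midpoint (1/2, 0, …, 0) of a lattice edge) equals 2·Σ_{i=0}^{p} C(k−1,i)·C(k+p−i, p−i), which also equals 2·Σ_{i=0}^{p} C(k−1,p−i)·C(k+i, i). -/
open Finset

/-- `G n r = ∑_{i=0}^r C(n,i) C(n+r-i, r-i)`: lattice points in L¹-ball of radius r in ℤⁿ. -/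
def G (n r : ℕ) : ℕ := ∑ i ∈ range (r+1), Nat.choose n i * Nat.choose (n + r - i) (r - i)

/-- `H n r = ∑_{i=0}^r C(n,i) C(n+1+r-i, r-i)`. -/
def H (n r : ℕ) : ℕ := ∑ i ∈ range (r+1), Nat.choose n i * Nat.choose (n + 1 + r - i) (r - i)

lemma G_zero (r : ℕ) : G 0 r = 1 := by
  unfold G
  rw [Finset.sum_eq_single 0]
  · simp
  · intro i _ hi
    rcases Nat.exists_eq_succ_of_ne_zero hi with ⟨j, rfl⟩
    simp [Nat.choose_eq_zero_of_lt]
  · simp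

lemma H_succ (n r : ℕ) : H n (r+1) = H n r + G n (r+1) := by
  unfold H G
  rw [Finset.sum_range_succ (n := r+1), Finset.sum_range_succ (n := r+1)]
  have h1 : ∀ i ∈ range (r+1),
      Nat.choose n i * Nat.choose (n + 1 + (r+1) - i) (r + 1 - i)
      = Nat.choose n i * Nat.choose (n + 1 + r - i) (r - i)
        + Nat.choose n i * Nat.choose (n + 1 + r - i) (r + 1 - i) := by
    intro i hi
    rw [mem_range] at hi
    have hir : i ≤ r := Nat.lt_succ_iff.mp hi
    have e1 : n + 1 + (r+1) - i = (n + 1 + r - i) + 1 := by omega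
    have e2 : r + 1 - i = (r - i) + 1 := by omega
    rw [e1, e2, Nat.choose_succ_succ']
    ring
  rw [Finset.sum_congr rfl h1, Finset.sum_add_distrib]
  have e3 : ∀ i : ℕ, i = r + 1 → n + 1 + (r+1) - i = n + (r+1) - i + 1 := by omega
  have e4 : n + 1 + (r+1) - (r+1) = n + 1 := by omega
  have e5 : n + (r+1) - (r+1) = n := by omega
  rw [e4, e5]
  have e6 : n + 1 + r = n + (r + 1) := by omega
  simp only [e6, Nat.sub_self, Nat.choose_zero_right, mul_one]
  ring

lemma H_eq_sum (n r : ℕ) : H n r = ∑ s ∈ range (r+1), G n s := by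
  induction r with
  | zero => simp [G, H]
  | succ m ih => rw [Finset.sum_range_succ, ← ih, H_succ]

lemma G_succ_succ (n r : ℕ) : G (n+1) (r+1) = H n (r+1) + H n r := by
  unfold G H
  rw [Finset.sum_range_succ' (fun i => Nat.choose (n+1) i * Nat.choose (n+1+(r+1)-i) (r+1-i)) (r+1),
      Finset.sum_range_succ' (fun i => Nat.choose n i * Nat.choose (n+1+(r+1)-i) (r+1-i)) (r+1)]
  have h1 : ∀ i ∈ range (r+1),
      Nat.choose (n+1) (i+1) * Nat.choose (n+1+(r+1)-(i+1)) (r+1-(i+1))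
      = Nat.choose n (i+1) * Nat.choose (n+1+(r+1)-(i+1)) (r+1-(i+1))
        + Nat.choose n i * Nat.choose (n+1+r-i) (r-i) := by
    intro i hi; rw [mem_range] at hi
    have e1 : n+1+(r+1)-(i+1) = n+1+r-i := by omega
    have e2 : r+1-(i+1) = r-i := by omega
    rw [Nat.choose_succ_succ' n i, e1, e2]
    ring
  rw [Finset.sum_congr rfl h1, Finset.sum_add_distrib]
  have e1 : ∀ i : ℕ, n+1+(r+1)-(i+1) = n+1+r-i := by omega
  simp only [e1, Nat.choose_zero_right, one_mul, Nat.sub_zero]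
  ring

lemma G_rec (n r : ℕ) : G (n+1) r = G n r + 2 * ∑ s ∈ range r, G n s := by
  cases r with
  | zero => simp [G]
  | succ m =>
    rw [G_succ_succ, H_succ, H_eq_sum]
    ring

/-- Lattice points in the L¹-ball of radius `r` in `ℤⁿ`, as a finset. -/
noncomputable def ballF (n r : ℕ) : Finset (Fin n → ℤ) :=
  (Fintype.piFinset fun _ => Finset.Icc (-(r:ℤ)) r).filter fun y => ∑ i, |y i| ≤ (r:ℤ)

noncomputable def M (n r : ℕ) : ℕ := (ballF n r).card

lemma mem_ballF {n r : ℕ} {y : Fin n → ℤ} : y ∈ ballF n r ↔ ∑ i, |y i| ≤ (r:ℤ) := by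
  constructor
  · exact fun h => (Finset.mem_filter.mp h).2
  · intro h
    refine Finset.mem_filter.mpr ⟨Fintype.mem_piFinset.mpr fun i => ?_, h⟩
    have h1 : |y i| ≤ (r:ℤ) :=
      le_trans (Finset.single_le_sum (fun j _ => abs_nonneg (y j)) (Finset.mem_univ i)) h
    rw [Finset.mem_Icc]
    exact abs_le.mp h1

lemma M_zero (r : ℕ) : M 0 r = 1 := by
  unfold M
  rw [Finset.card_eq_one]
  refine ⟨fun i => 0, ?_⟩
  ext y
  simp only [Finset.mem_singleton, mem_ballF]
  constructor
  · intro _; funext i; exact i.elim0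
  · intro _; simp

lemma M_rec (n r : ℕ) :
    M (n+1) r = ∑ a ∈ Finset.Icc (-(r:ℤ)) r, M n (r - a.natAbs) := by
  unfold M
  rw [Finset.card_eq_sum_card_fiberwise (f := fun y => y 0)
    (t := Finset.Icc (-(r:ℤ)) r) (fun y hy => by
      rw [Finset.mem_coe, mem_ballF] at hy
      have h1 : |y 0| ≤ (r:ℤ) :=
        le_trans (Finset.single_le_sum (fun j _ => abs_nonneg (y j)) (Finset.mem_univ 0)) hy
      exact Finset.mem_coe.mpr (Finset.mem_Icc.mpr (abs_le.mp h1)))]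
  refine Finset.sum_congr rfl fun a ha => ?_
  rw [Finset.mem_Icc] at ha
  refine Finset.card_bij' (fun y _ => Fin.tail y) (fun z _ => Fin.cons a z) ?_ ?_ ?_ ?_
  · intro y hy
    rw [Finset.mem_filter] at hy
    obtain ⟨hy1, hy2⟩ := hy
    rw [mem_ballF] at hy1 ⊢
    rw [Fin.sum_univ_succ, hy2] at hy1
    have hs0 : (0:ℤ) ≤ ∑ i : Fin n, |Fin.tail y i| :=
      Finset.sum_nonneg fun i _ => abs_nonneg _
    have ha2 : |a| = (a.natAbs : ℤ) := Int.abs_eq_natAbs a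
    have he : ∑ i : Fin n, |Fin.tail y i| = ∑ i : Fin n, |y i.succ| :=
      Finset.sum_congr rfl fun i _ => rfl
    rw [he]
    omega
  · intro z hz
    rw [mem_ballF] at hz
    refine Finset.mem_filter.mpr ⟨?_, rfl⟩
    rw [mem_ballF, Fin.sum_univ_succ]
    simp only [Fin.cons_zero, Fin.cons_succ]
    have hs0 : (0:ℤ) ≤ ∑ i : Fin n, |z i| := Finset.sum_nonneg fun i _ => abs_nonneg _
    have ha2 : |a| = (a.natAbs : ℤ) := Int.abs_eq_natAbs a
    have ha3 : a.natAbs ≤ r := by omega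
    omega
  · intro y hy
    rw [Finset.mem_filter] at hy
    have h2 := hy.2
    show Fin.cons a (Fin.tail y) = y
    rw [← h2]
    exact Fin.cons_self_tail y
  · intro z _
    funext i
    exact Fin.cons_succ (α := fun _ : Fin (n+1) => ℤ) a z i

lemma sum_Icc_natAbs (g : ℕ → ℕ) (r : ℕ) :
    ∑ a ∈ Finset.Icc (-(r:ℤ)) r, g a.natAbs = g 0 + 2 * ∑ t ∈ range r, g (t+1) := by
  induction r with
  | zero => simp
  | succ m ih =>
    have hset : Finset.Icc (-((m:ℤ)+1)) ((m:ℤ)+1)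
        = insert (-((m:ℤ)+1)) (insert ((m:ℤ)+1) (Finset.Icc (-(m:ℤ)) m)) := by
      ext a
      simp only [Finset.mem_Icc, Finset.mem_insert]
      omega
    have h1 : ((m:ℤ)+1) ∉ Finset.Icc (-(m:ℤ)) (m:ℤ) := by
      simp only [Finset.mem_Icc]; omega
    have h2 : (-((m:ℤ)+1)) ∉ insert ((m:ℤ)+1) (Finset.Icc (-(m:ℤ)) (m:ℤ)) := by
      simp only [Finset.mem_insert, Finset.mem_Icc]; omega
    rw [show (((m+1:ℕ)):ℤ) = ((m:ℤ)+1) by omega]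
    rw [hset, Finset.sum_insert h2, Finset.sum_insert h1, ih]
    have e1 : ((-((m:ℤ)+1)).natAbs) = m+1 := by omega
    have e2 : (((m:ℤ)+1).natAbs) = m+1 := by omega
    rw [e1, e2, Finset.sum_range_succ]
    ring

lemma M_rec' (n r : ℕ) : M (n+1) r = M n r + 2 * ∑ s ∈ range r, M n s := by
  rw [M_rec, sum_Icc_natAbs (fun t => M n (r - t)) r]
  have h : ∑ t ∈ range r, M n (r - (t+1)) = ∑ s ∈ range r, M n s := by
    rw [← Finset.sum_range_reflect (fun s => M n s) r]
    exact Finset.sum_congr rfl fun t ht => by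
      rw [mem_range] at ht; congr 1; omega
  rw [Nat.sub_zero, h]


/-- `latticeBallOdd k p hk` is the number of lattice points `x ∈ ℤ^k` with
`|2 x₁ - 1| + ∑_{i ≥ 2} 2 |x i| ≤ 2p + 1`, i.e. the number of lattice points in a
maximal L¹-ball of odd diameter `2p+1` (radius `p + 1/2`, centered at the midpoint
`(1/2, 0, …, 0)` of a lattice edge). -/
noncomputable def latticeBallOdd (k p : ℕ) (hk : 0 < k) : ℕ :=
  Set.ncard {x : Fin k → ℤ |
    |2 * x ⟨0, hk⟩ - 1| + ∑ i ∈ Finset.univ.erase (⟨0, hk⟩ : Fin k), 2 * |x i| ≤ 2 * (p : ℤ) + 1}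

lemma sum_erase_eq (n : ℕ) (x : Fin (n+1) → ℤ) :
    ∑ i ∈ Finset.univ.erase (0 : Fin (n+1)), 2 * |x i| = ∑ i : Fin n, 2 * |x i.succ| := by
  have h := Finset.add_sum_erase Finset.univ (fun i => 2 * |x i|) (Finset.mem_univ (0 : Fin (n+1)))
  rw [Fin.sum_univ_succ (fun i => 2 * |x i|)] at h
  exact add_left_cancel h

/-- The odd ball as a finset. -/
noncomputable def oddF (n p : ℕ) : Finset (Fin (n+1) → ℤ) :=
  (Fintype.piFinset fun _ => Finset.Icc (-((p:ℤ)+1)) ((p:ℤ)+1)).filter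
    (fun x => |2 * x 0 - 1| + ∑ i ∈ Finset.univ.erase (0 : Fin (n+1)), 2 * |x i| ≤ 2*(p:ℤ)+1)

lemma mem_oddF {n p : ℕ} {x : Fin (n+1) → ℤ} :
    x ∈ oddF n p ↔
      |2 * x 0 - 1| + ∑ i ∈ Finset.univ.erase (0 : Fin (n+1)), 2 * |x i| ≤ 2*(p:ℤ)+1 := by
  constructor
  · exact fun h => (Finset.mem_filter.mp h).2
  · intro h
    refine Finset.mem_filter.mpr ⟨Fintype.mem_piFinset.mpr fun i => ?_, h⟩
    have hsum : (0:ℤ) ≤ ∑ i ∈ Finset.univ.erase (0 : Fin (n+1)), 2 * |x i| :=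
      Finset.sum_nonneg fun j _ => by positivity
    rw [Finset.mem_Icc]
    rcases eq_or_ne i 0 with rfl | hi
    · have h1 : |2 * x 0 - 1| ≤ 2*(p:ℤ)+1 := by linarith
      have h2 : |2 * x 0 - 1| = ((2 * x 0 - 1).natAbs : ℤ) := Int.abs_eq_natAbs _
      omega
    · have hmem : i ∈ Finset.univ.erase (0 : Fin (n+1)) :=
        Finset.mem_erase.mpr ⟨hi, Finset.mem_univ i⟩
      have h1 : 2 * |x i| ≤ ∑ j ∈ Finset.univ.erase (0 : Fin (n+1)), 2 * |x j| :=
        Finset.single_le_sum (f := fun j => 2 * |x j|) (fun j _ => by positivity) hmem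
      have h2 : (0:ℤ) ≤ |2 * x 0 - 1| := abs_nonneg _
      have h3 : |x i| = ((x i).natAbs : ℤ) := Int.abs_eq_natAbs _
      omega

lemma count_odd (n p : ℕ) (h : 0 < n+1) :
    latticeBallOdd (n+1) p h
      = ∑ a ∈ Finset.Icc (-(p:ℤ)) ((p:ℤ)+1), M n (p - (2*a-1).natAbs / 2) := by
  classical
  have hFset : {x : Fin (n+1) → ℤ |
      |2 * x ⟨0,h⟩ - 1| + ∑ i ∈ Finset.univ.erase ((⟨0,h⟩ : Fin (n+1))), 2 * |x i|
        ≤ 2*(p:ℤ)+1} = ↑(oddF n p) := by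
    ext x
    rw [Set.mem_setOf_eq, Finset.mem_coe, mem_oddF]
    rfl
  rw [latticeBallOdd, hFset, Set.ncard_coe_finset]
  rw [Finset.card_eq_sum_card_fiberwise (f := fun x => x 0)
    (t := Finset.Icc (-(p:ℤ)) ((p:ℤ)+1)) (fun x hx => by
      rw [Finset.mem_coe, mem_oddF] at hx
      have hsum : (0:ℤ) ≤ ∑ i ∈ Finset.univ.erase (0 : Fin (n+1)), 2 * |x i| :=
        Finset.sum_nonneg fun j _ => by positivity
      have h2 : |2 * x 0 - 1| = ((2 * x 0 - 1).natAbs : ℤ) := Int.abs_eq_natAbs _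
      simp only [Finset.mem_coe, Finset.mem_Icc]
      omega)]
  refine Finset.sum_congr rfl fun a ha => ?_
  rw [Finset.mem_Icc] at ha
  refine Finset.card_bij' (fun y _ => Fin.tail y) (fun z _ => Fin.cons a z) ?_ ?_ ?_ ?_
  · intro y hy
    rw [Finset.mem_filter, mem_oddF] at hy
    obtain ⟨hy1, hy2⟩ := hy
    rw [sum_erase_eq, hy2] at hy1
    rw [mem_ballF]
    have he : ∑ i : Fin n, |Fin.tail y i| = ∑ i : Fin n, |y i.succ| :=
      Finset.sum_congr rfl fun i _ => rfl
    rw [he]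
    rw [← Finset.mul_sum] at hy1
    have hs0 : (0:ℤ) ≤ ∑ i : Fin n, |y i.succ| :=
      Finset.sum_nonneg fun i _ => abs_nonneg _
    have h2 : |2 * a - 1| = ((2 * a - 1).natAbs : ℤ) := Int.abs_eq_natAbs _
    omega
  · intro z hz
    rw [mem_ballF] at hz
    refine Finset.mem_filter.mpr ⟨?_, rfl⟩
    rw [mem_oddF]
    simp only [Fin.cons_zero]
    rw [sum_erase_eq]
    have he : ∑ i : Fin n, 2 * |Fin.cons (α := fun _ : Fin (n+1) => ℤ) a z i.succ|
        = 2 * ∑ i : Fin n, |z i| := by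
      rw [← Finset.mul_sum]
      simp [Fin.cons_succ]
    rw [he]
    have hs0 : (0:ℤ) ≤ ∑ i : Fin n, |z i| := Finset.sum_nonneg fun i _ => abs_nonneg _
    have h2 : |2 * a - 1| = ((2 * a - 1).natAbs : ℤ) := Int.abs_eq_natAbs _
    omega
  · intro y hy
    rw [Finset.mem_filter] at hy
    have h2 := hy.2
    show Fin.cons a (Fin.tail y) = y
    rw [← h2]
    exact Fin.cons_self_tail y
  · intro z _
    funext i
    exact Fin.cons_succ (α := fun _ : Fin (n+1) => ℤ) a z i

lemma sum_Icc_odd (g : ℕ → ℕ) (p : ℕ) :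
    ∑ a ∈ Finset.Icc (-(p:ℤ)) ((p:ℤ)+1), g ((2*a-1).natAbs / 2)
      = 2 * ∑ t ∈ range (p+1), g t := by
  induction p with
  | zero =>
    have hset : Finset.Icc (-((0:ℕ):ℤ)) (((0:ℕ):ℤ)+1) = {0, 1} := by
      ext a
      simp only [Finset.mem_Icc, Finset.mem_insert, Finset.mem_singleton]
      omega
    rw [hset, Finset.sum_insert (by simp), Finset.sum_singleton]
    have e1 : ((2*(0:ℤ)-1).natAbs / 2) = 0 := by omega
    have e2 : ((2*(1:ℤ)-1).natAbs / 2) = 0 := by omega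
    rw [e1, e2, Finset.sum_range_one]
    ring
  | succ m ih =>
    have hset : Finset.Icc (-((m:ℤ)+1)) ((m:ℤ)+2)
        = insert (-((m:ℤ)+1)) (insert ((m:ℤ)+2) (Finset.Icc (-(m:ℤ)) ((m:ℤ)+1))) := by
      ext a
      simp only [Finset.mem_Icc, Finset.mem_insert]
      omega
    have h1 : ((m:ℤ)+2) ∉ Finset.Icc (-(m:ℤ)) ((m:ℤ)+1) := by
      simp only [Finset.mem_Icc]; omega
    have h2 : (-((m:ℤ)+1)) ∉ insert ((m:ℤ)+2) (Finset.Icc (-(m:ℤ)) ((m:ℤ)+1)) := by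
      simp only [Finset.mem_insert, Finset.mem_Icc]; omega
    rw [show (((m+1:ℕ)):ℤ) = ((m:ℤ)+1) by omega,
        show ((m:ℤ)+1)+1 = ((m:ℤ)+2) by ring]
    rw [hset, Finset.sum_insert h2, Finset.sum_insert h1, ih]
    have e1 : ((2*(-((m:ℤ)+1))-1).natAbs / 2) = m+1 := by omega
    have e2 : ((2*((m:ℤ)+2)-1).natAbs / 2) = m+1 := by omega
    rw [e1, e2, Finset.sum_range_succ g (m+1), Finset.sum_range_succ g m]
    ring

lemma M_eq_G (n r : ℕ) : M n r = G n r := by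
  induction n generalizing r with
  | zero => rw [M_zero, G_zero]
  | succ m ih =>
    rw [M_rec', G_rec, ih r]
    have h : ∑ s ∈ range r, M m s = ∑ s ∈ range r, G m s :=
      Finset.sum_congr rfl fun s _ => ih s
    rw [h]

/-- For all `k ≥ 1` and `p ≥ 0`, the number of lattice points in a maximal
L¹-ball of odd diameter `2p+1` in `ℤ^k` equals `2·∑_{i=0}^{p} C(k−1,i)·C(k+p−i, p−i)`,
which also equals `2·∑_{i=0}^{p} C(k−1,p−i)·C(k+i, i)`. -/
theorem latticeBallOdd_eq (k p : ℕ) (hk : 1 ≤ k) :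
    latticeBallOdd k p hk =
      2 * ∑ i ∈ Finset.range (p + 1), Nat.choose (k - 1) i * Nat.choose (k + p - i) (p - i) ∧
    latticeBallOdd k p hk =
      2 * ∑ i ∈ Finset.range (p + 1), Nat.choose (k - 1) (p - i) * Nat.choose (k + i) i := by
  cases k with
  | zero => exact absurd hk (by omega)
  | succ n =>
    have h1 : latticeBallOdd (n+1) p hk
        = 2 * ∑ i ∈ Finset.range (p + 1),
            Nat.choose n i * Nat.choose (n + 1 + p - i) (p - i) := by
      rw [count_odd n p hk, sum_Icc_odd (fun t => M n (p - t)) p]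
      have h2 : ∑ t ∈ range (p+1), M n (p - t) = ∑ r ∈ range (p+1), M n r := by
        rw [← Finset.sum_range_reflect (fun s => M n s) (p+1)]
        exact Finset.sum_congr rfl fun t ht => congrArg (M n) (by omega)
      have h3 : ∑ r ∈ range (p+1), M n r = ∑ r ∈ range (p+1), G n r :=
        Finset.sum_congr rfl fun r _ => M_eq_G n r
      rw [h2, h3, ← H_eq_sum, H]
    have hn : n + 1 - 1 = n := rfl
    have hfirst : latticeBallOdd (n+1) p hk =
        2 * ∑ i ∈ Finset.range (p + 1),
          Nat.choose (n + 1 - 1) i * Nat.choose (n + 1 + p - i) (p - i) := by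
      rw [hn, h1]
    refine ⟨hfirst, ?_⟩
    rw [hfirst]
    congr 1
    rw [← Finset.sum_range_reflect
      (fun i => Nat.choose (n + 1 - 1) (p - i) * Nat.choose (n + 1 + i) i) (p+1)]
    refine Finset.sum_congr rfl fun i hi => ?_
    rw [mem_range] at hi
    have e1 : p - (p + 1 - 1 - i) = i := by omega
    have e2 : n + 1 + (p + 1 - 1 - i) = n + 1 + p - i := by omega
    have e3 : p + 1 - 1 - i = p - i := by omega
    rw [e1, e2, e3]
end

section
/- For all integers k ≥ 2 and p ≥ 1, the counts g(k,p) of lattice points in maximal odd-diameter L¹-balls satisfy the recurrence g(k,p) = g(k,p−1) + g(k−1,p) + g(k−1,p−1). -/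
namespace LatticeBallAux


variable {γ : Type*}

lemma finite_prod (F : γ → ℤ) (hfin : ∀ B : ℤ, {b : γ | F b ≤ B}.Finite)
    (hF : ∀ b, 0 ≤ F b) (B : ℤ) :
    {z : γ × ℤ | F z.1 + 2 * |z.2| ≤ B}.Finite := by
  apply Set.Finite.subset (Set.Finite.prod (hfin B) (Set.finite_Icc (-B) B))
  rintro ⟨b, m⟩ h
  simp only [Set.mem_setOf_eq] at h
  have h1 := hF b
  have h2 := abs_nonneg m
  refine ⟨by simp only [Set.mem_setOf_eq]; omega, ?_⟩
  have hm : |m| ≤ B := by omega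
  simpa [Set.mem_Icc] using abs_le.mp hm

lemma key (F : γ → ℤ) (hfin : ∀ B : ℤ, {b : γ | F b ≤ B}.Finite)
    (hF : ∀ b, 0 ≤ F b) (q : ℤ) :
    {z : γ × ℤ | F z.1 + 2 * |z.2| ≤ 2 * q + 3}.ncard =
      {z : γ × ℤ | F z.1 + 2 * |z.2| ≤ 2 * q + 1}.ncard
        + {b : γ | F b ≤ 2 * q + 3}.ncard + {b : γ | F b ≤ 2 * q + 1}.ncard := by
  set S0 : Set (γ × ℤ) := {z | z.2 = 0 ∧ F z.1 ≤ 2 * q + 3} with hS0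
  set Sp : Set (γ × ℤ) := {z | 0 < z.2 ∧ F z.1 + 2 * z.2 ≤ 2 * q + 3} with hSp
  set Sm : Set (γ × ℤ) := {z | z.2 < 0 ∧ F z.1 - 2 * z.2 ≤ 2 * q + 3} with hSm
  set Tge : Set (γ × ℤ) := {z | 0 ≤ z.2 ∧ F z.1 + 2 * z.2 ≤ 2 * q + 1} with hTge
  set Tle : Set (γ × ℤ) := {z | z.2 ≤ 0 ∧ F z.1 - 2 * z.2 ≤ 2 * q + 1} with hTle
  have habs : ∀ z : γ × ℤ, F z.1 + 2 * |z.2| ≤ 2 * q + 3 ↔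
      (F z.1 + 2 * z.2 ≤ 2 * q + 3 ∧ F z.1 - 2 * z.2 ≤ 2 * q + 3) := by
    intro z
    rcases abs_cases z.2 with ⟨h1, h2⟩ | ⟨h1, h2⟩ <;> rw [h1] <;> omega
  have habs' : ∀ z : γ × ℤ, F z.1 + 2 * |z.2| ≤ 2 * q + 1 ↔
      (F z.1 + 2 * z.2 ≤ 2 * q + 1 ∧ F z.1 - 2 * z.2 ≤ 2 * q + 1) := by
    intro z
    rcases abs_cases z.2 with ⟨h1, h2⟩ | ⟨h1, h2⟩ <;> rw [h1] <;> omega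
  have hbig := finite_prod F hfin hF (2 * q + 3)
  have hbig' := finite_prod F hfin hF (2 * q + 1)
  have hsplit : {z : γ × ℤ | F z.1 + 2 * |z.2| ≤ 2 * q + 3} = S0 ∪ (Sp ∪ Sm) := by
    ext z
    rw [Set.mem_setOf_eq, habs z]
    simp only [Set.mem_union, hS0, hSp, hSm, Set.mem_setOf_eq]
    omega
  have hfS0 : S0.Finite := hbig.subset (by
    rintro ⟨b, m⟩ ⟨h1, h2⟩; rw [Set.mem_setOf_eq, habs]; omega)
  have hfSp : Sp.Finite := hbig.subset (by
    rintro ⟨b, m⟩ ⟨h1, h2⟩; rw [Set.mem_setOf_eq, habs]; omega)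
  have hfSm : Sm.Finite := hbig.subset (by
    rintro ⟨b, m⟩ ⟨h1, h2⟩; rw [Set.mem_setOf_eq, habs]; omega)
  have hfTge : Tge.Finite := hbig'.subset (by
    rintro ⟨b, m⟩ ⟨h1, h2⟩; rw [Set.mem_setOf_eq, habs']; omega)
  have hfTle : Tle.Finite := hbig'.subset (by
    rintro ⟨b, m⟩ ⟨h1, h2⟩; rw [Set.mem_setOf_eq, habs']; omega)
  have hd1 : Disjoint S0 (Sp ∪ Sm) := by
    rw [Set.disjoint_left]
    rintro ⟨b, m⟩ ⟨h1, _⟩ h2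
    simp only [Set.mem_union, hSp, hSm, Set.mem_setOf_eq] at h2
    omega
  have hd2 : Disjoint Sp Sm := by
    rw [Set.disjoint_left]
    rintro ⟨b, m⟩ ⟨h1, _⟩ ⟨h2, _⟩
    omega
  have hcard : {z : γ × ℤ | F z.1 + 2 * |z.2| ≤ 2 * q + 3}.ncard =
      S0.ncard + Sp.ncard + Sm.ncard := by
    rw [hsplit, Set.ncard_union_eq hd1 hfS0 (hfSp.union hfSm),
      Set.ncard_union_eq hd2 hfSp hfSm, add_assoc]
  -- S0
  have hS0card : S0.ncard = {b : γ | F b ≤ 2 * q + 3}.ncard := by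
    have : S0 = (fun b : γ => (b, (0 : ℤ))) '' {b : γ | F b ≤ 2 * q + 3} := by
      ext ⟨b, m⟩
      simp only [hS0, Set.mem_setOf_eq, Set.mem_image, Prod.mk.injEq]
      constructor
      · rintro ⟨rfl, h⟩; exact ⟨b, h, rfl, rfl⟩
      · rintro ⟨a, h, rfl, rfl⟩; exact ⟨rfl, h⟩
    rw [this, Set.ncard_image_of_injective]
    intro a b hab
    simpa using hab
  -- Sp ≃ Tge
  have hSpcard : Sp.ncard = Tge.ncard := by
    have : Sp = (fun z : γ × ℤ => (z.1, z.2 + 1)) '' Tge := by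
      ext ⟨b, m⟩
      simp only [hSp, hTge, Set.mem_setOf_eq, Set.mem_image, Prod.mk.injEq, Prod.exists]
      constructor
      · rintro ⟨h1, h2⟩; exact ⟨b, m - 1, ⟨by omega, by omega⟩, rfl, by omega⟩
      · rintro ⟨a, c, ⟨h1, h2⟩, rfl, rfl⟩; exact ⟨by omega, by omega⟩
    rw [this, Set.ncard_image_of_injective]
    rintro ⟨a, c⟩ ⟨a', c'⟩ hab
    simp only [Prod.mk.injEq] at hab
    obtain ⟨rfl, h⟩ := hab
    simp [show c = c' by omega]
  have hSmcard : Sm.ncard = Tle.ncard := by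
    have : Sm = (fun z : γ × ℤ => (z.1, z.2 - 1)) '' Tle := by
      ext ⟨b, m⟩
      simp only [hSm, hTle, Set.mem_setOf_eq, Set.mem_image, Prod.mk.injEq, Prod.exists]
      constructor
      · rintro ⟨h1, h2⟩; exact ⟨b, m + 1, ⟨by omega, by omega⟩, rfl, by omega⟩
      · rintro ⟨a, c, ⟨h1, h2⟩, rfl, rfl⟩; exact ⟨by omega, by omega⟩
    rw [this, Set.ncard_image_of_injective]
    rintro ⟨a, c⟩ ⟨a', c'⟩ hab
    simp only [Prod.mk.injEq] at hab
    obtain ⟨rfl, h⟩ := hab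
    simp [show c = c' by omega]
  -- Tge + Tle
  have hunion : Tge ∪ Tle = {z : γ × ℤ | F z.1 + 2 * |z.2| ≤ 2 * q + 1} := by
    ext z
    rw [Set.mem_union, hTge, hTle, Set.mem_setOf_eq, Set.mem_setOf_eq, Set.mem_setOf_eq, habs' z]
    omega
  have hinter : (Tge ∩ Tle).ncard = {b : γ | F b ≤ 2 * q + 1}.ncard := by
    have : Tge ∩ Tle = (fun b : γ => (b, (0 : ℤ))) '' {b : γ | F b ≤ 2 * q + 1} := by
      ext ⟨b, m⟩
      simp only [Set.mem_inter_iff, hTge, hTle, Set.mem_setOf_eq, Set.mem_image, Prod.mk.injEq]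
      constructor
      · rintro ⟨⟨h1, h2⟩, h3, h4⟩; exact ⟨b, by omega, rfl, by omega⟩
      · rintro ⟨a, h, rfl, rfl⟩; exact ⟨⟨le_refl 0, by omega⟩, le_refl 0, by omega⟩
    rw [this, Set.ncard_image_of_injective]
    intro a b hab
    simpa using hab
  have hsum := Set.ncard_union_add_ncard_inter Tge Tle hfTge hfTle
  rw [hunion, hinter] at hsum
  omega



def Fz (n : ℕ) : ℤ × (Fin n → ℤ) → ℤ := fun b => |2 * b.1 - 1| + ∑ i, 2 * |b.2 i|

lemma Fz_nonneg (n : ℕ) (b : ℤ × (Fin n → ℤ)) : 0 ≤ Fz n b := by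
  have h1 := abs_nonneg (2 * b.1 - 1)
  have h2 : (0 : ℤ) ≤ ∑ i, 2 * |b.2 i| :=
    Finset.sum_nonneg fun i _ => by positivity
  unfold Fz; omega

lemma Fz_fin (n : ℕ) (B : ℤ) : {b : ℤ × (Fin n → ℤ) | Fz n b ≤ B}.Finite := by
  apply Set.Finite.subset (Set.Finite.prod (Set.finite_Icc (-B) B)
    (Set.Finite.pi fun _ : Fin n => Set.finite_Icc (-B) B))
  rintro ⟨a, y⟩ h
  simp only [Set.mem_setOf_eq, Fz] at h
  have hsum : (0 : ℤ) ≤ ∑ i, 2 * |y i| := Finset.sum_nonneg fun i _ => by positivity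
  have ha : |2 * a - 1| ≤ B := by omega
  have ha' := abs_le.mp ha
  constructor
  · simp only [Set.mem_Icc]; omega
  · intro i _
    have hi : 2 * |y i| ≤ ∑ j, 2 * |y j| :=
      Finset.single_le_sum (f := fun j => 2 * |y j|) (fun j _ => by positivity)
        (Finset.mem_univ i)
    have habs := abs_nonneg (2 * a - 1)
    have hy : |y i| ≤ B := by omega
    have := abs_le.mp hy
    simp only [Set.mem_Icc]
    omega

noncomputable def cnt (n p : ℕ) : ℕ :=
  {z : ℤ × (Fin n → ℤ) | |2 * z.1 - 1| + ∑ i, 2 * |z.2 i| ≤ 2 * (p : ℤ) + 1}.ncard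

lemma sum_erase_eq (n : ℕ) (f : Fin (n + 1) → ℤ) :
    ∑ i ∈ Finset.univ.erase (0 : Fin (n + 1)), f i = ∑ i : Fin n, f i.succ := by
  have h := Fin.sum_univ_succ f
  have h2 := Finset.sum_erase_add Finset.univ f (Finset.mem_univ (0 : Fin (n + 1)))
  omega

lemma lbo_eq (n p : ℕ) (h : 0 < n + 1) :
    Set.ncard {x : Fin (n + 1) → ℤ |
      |2 * x ⟨0, h⟩ - 1| + ∑ i ∈ Finset.univ.erase (⟨0, h⟩ : Fin (n + 1)), 2 * |x i| ≤
        2 * (p : ℤ) + 1} = cnt n p := by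
  simp only [Fin.mk_zero]
  have hinj : Function.Injective
      (fun x : Fin (n + 1) → ℤ => ((x 0, fun i => x i.succ) : ℤ × (Fin n → ℤ))) := by
    intro x x' hx
    simp only [Prod.mk.injEq] at hx
    funext i
    induction i using Fin.cases with
    | zero => exact hx.1
    | succ j => exact congrFun hx.2 j
  rw [← Set.ncard_image_of_injective _ hinj]
  unfold cnt
  congr 1
  ext ⟨a, y⟩
  simp only [Set.mem_image, Set.mem_setOf_eq, Prod.mk.injEq]
  constructor
  · rintro ⟨x, hx, rfl, rfl⟩
    rw [sum_erase_eq n (fun i => 2 * |x i|)] at hx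
    exact hx
  · intro ha
    refine ⟨Fin.cons a y, ?_, ?_, ?_⟩
    · rw [sum_erase_eq n (fun i => 2 * |(Fin.cons a y : Fin (n + 1) → ℤ) i|)]
      simpa [Fin.cons_succ, Fin.cons_zero] using ha
    · simp [Fin.cons_zero]
    · funext i; simp [Fin.cons_succ]

lemma cnt_succ (n : ℕ) (B : ℤ) :
    {z : ℤ × (Fin (n + 1) → ℤ) | |2 * z.1 - 1| + ∑ i, 2 * |z.2 i| ≤ B}.ncard =
      {w : (ℤ × (Fin n → ℤ)) × ℤ | Fz n w.1 + 2 * |w.2| ≤ B}.ncard := by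
  have hinj : Function.Injective
      (fun z : ℤ × (Fin (n + 1) → ℤ) =>
        (((z.1, fun i => z.2 i.succ), z.2 0) : (ℤ × (Fin n → ℤ)) × ℤ)) := by
    rintro ⟨a, x⟩ ⟨a', x'⟩ hz
    simp only [Prod.mk.injEq] at hz
    obtain ⟨⟨rfl, hs⟩, h0⟩ := hz
    simp only [Prod.mk.injEq, true_and]
    funext i
    induction i using Fin.cases with
    | zero => exact h0
    | succ j => exact congrFun hs j
  rw [← Set.ncard_image_of_injective _ hinj]
  congr 1
  ext ⟨⟨a, y⟩, m⟩
  simp only [Set.mem_image, Set.mem_setOf_eq, Prod.mk.injEq, Fz, Prod.exists]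
  constructor
  · rintro ⟨c, x, hx, ⟨rfl, rfl⟩, rfl⟩
    rw [Fin.sum_univ_succ (fun i => 2 * |x i|)] at hx
    dsimp only
    omega
  · intro hx
    refine ⟨a, (Fin.cons m y : Fin (n + 1) → ℤ), ?_, ⟨rfl, ?_⟩, ?_⟩
    · rw [show (∑ i : Fin (n + 1), 2 * |(Fin.cons m y : Fin (n + 1) → ℤ) i|) =
          2 * |m| + ∑ i : Fin n, 2 * |y i| by
        rw [Fin.sum_univ_succ (fun i => 2 * |(Fin.cons m y : Fin (n + 1) → ℤ) i|)]
        simp [Fin.cons_succ, Fin.cons_zero]]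
      omega
    · funext i; simp [Fin.cons_succ]
    · simp [Fin.cons_zero]


lemma cnt_eq_F (n p : ℕ) : cnt n p = {b : ℤ × (Fin n → ℤ) | Fz n b ≤ 2 * (p : ℤ) + 1}.ncard := rfl

lemma cnt_rec (n q : ℕ) : cnt (n + 1) (q + 1) = cnt (n + 1) q + cnt n (q + 1) + cnt n q := by
  unfold cnt
  rw [cnt_succ n (2 * ((q + 1 : ℕ) : ℤ) + 1), cnt_succ n (2 * ((q : ℕ) : ℤ) + 1)]
  have h1 : {w : (ℤ × (Fin n → ℤ)) × ℤ | Fz n w.1 + 2 * |w.2| ≤ 2 * ((q + 1 : ℕ) : ℤ) + 1} =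
      {w : (ℤ × (Fin n → ℤ)) × ℤ | Fz n w.1 + 2 * |w.2| ≤ 2 * (q : ℤ) + 3} := by
    ext w; simp only [Set.mem_setOf_eq]; push_cast; omega
  have h2 : {z : ℤ × (Fin n → ℤ) | |2 * z.1 - 1| + ∑ i, 2 * |z.2 i| ≤ 2 * ((q + 1 : ℕ) : ℤ) + 1} =
      {b : ℤ × (Fin n → ℤ) | Fz n b ≤ 2 * (q : ℤ) + 3} := by
    ext b; simp only [Set.mem_setOf_eq, Fz]; push_cast; omega
  have h3 : {z : ℤ × (Fin n → ℤ) | |2 * z.1 - 1| + ∑ i, 2 * |z.2 i| ≤ 2 * ((q : ℕ) : ℤ) + 1} =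
      {b : ℤ × (Fin n → ℤ) | Fz n b ≤ 2 * (q : ℤ) + 1} := by
    ext b; simp only [Set.mem_setOf_eq, Fz]
  rw [h1, h2, h3]
  exact key (Fz n) (Fz_fin n) (Fz_nonneg n) (q : ℤ)

end LatticeBallAux

open LatticeBallAux in
/-- For all `k ≥ 2` and `p ≥ 1`, the counts of lattice points in maximal
odd-diameter L¹-balls satisfy `g(k,p) = g(k,p−1) + g(k−1,p) + g(k−1,p−1)`. -/
theorem latticeBallOdd_recurrence (k p : ℕ) (hk : 2 ≤ k) (hp : 1 ≤ p) :
    latticeBallOdd k p (by omega) =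
      latticeBallOdd k (p - 1) (by omega) + latticeBallOdd (k - 1) p (by omega) +
        latticeBallOdd (k - 1) (p - 1) (by omega) := by
  obtain ⟨n, rfl⟩ : ∃ n, k = n + 2 := ⟨k - 2, by omega⟩
  obtain ⟨q, rfl⟩ : ∃ q, p = q + 1 := ⟨p - 1, by omega⟩
  show latticeBallOdd (n + 2) (q + 1) (by omega) =
      latticeBallOdd (n + 2) q (by omega) + latticeBallOdd (n + 1) (q + 1) (by omega) +
        latticeBallOdd (n + 1) q (by omega)
  have e1 : latticeBallOdd (n + 2) (q + 1) (by omega) = cnt (n + 1) (q + 1) :=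
    lbo_eq (n + 1) (q + 1) (by omega)
  have e2 : latticeBallOdd (n + 2) q (by omega) = cnt (n + 1) q := lbo_eq (n + 1) q (by omega)
  have e3 : latticeBallOdd (n + 1) (q + 1) (by omega) = cnt n (q + 1) :=
    lbo_eq n (q + 1) (by omega)
  have e4 : latticeBallOdd (n + 1) q (by omega) = cnt n q := lbo_eq n q (by omega)
  rw [e1, e2, e3, e4]
  exact cnt_rec n q
end

section
/- For every integer k ≥ 0, the following identity of formal power series over ℤ holds: (1 − X)^{k+1} · Σ_{p≥0} f(k,p) X^p = (1 + X)^k, where f(k,p) is the number of lattice points in the closed L¹-ball of radius p in ℤ^k. Equivalently, the generating function Σ_{p≥0} f(k,p) X^p equals (1+X)^k/(1−X)^{k+1}. -/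
/-- `latticeBall k p` is the number of lattice points `x ∈ ℤ^k` with `∑ i, |x i| ≤ p`,
i.e. the cardinality of the closed L¹-ball `B_k(p)` centered at a lattice point. -/
noncomputable def latticeBall (k p : ℕ) : ℕ :=
  Set.ncard {x : Fin k → ℤ | ∑ i, |x i| ≤ (p : ℤ)}

namespace LatticeBallAux

/-- Finset model of the L¹ ball. -/
noncomputable def D (k p : ℕ) : Finset (Fin k → ℤ) :=
  (Finset.Icc (fun _ => -(p : ℤ)) (fun _ => (p : ℤ))).filter fun x => ∑ i, |x i| ≤ (p : ℤ)

lemma mem_D {k p : ℕ} {x : Fin k → ℤ} : x ∈ D k p ↔ ∑ i, |x i| ≤ (p : ℤ) := by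
  constructor
  · exact fun h => (Finset.mem_filter.1 h).2
  · intro h
    refine Finset.mem_filter.2 ⟨Finset.mem_Icc.2 ?_, h⟩
    have hb : ∀ i, |x i| ≤ (p : ℤ) := fun i =>
      le_trans (Finset.single_le_sum (f := fun i => |x i|)
        (fun j _ => abs_nonneg _) (Finset.mem_univ i)) h
    exact ⟨fun i => neg_le_of_abs_le (hb i), fun i => (abs_le.1 (hb i)).2⟩

lemma latticeBall_eq (k p : ℕ) : latticeBall k p = (D k p).card := by
  rw [latticeBall, show {x : Fin k → ℤ | ∑ i, |x i| ≤ (p : ℤ)} = ↑(D k p) from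
    Set.ext fun x => by simp [mem_D, Set.mem_setOf_eq], Set.ncard_coe_finset]

lemma sum_abs_snoc {k : ℕ} (y : Fin k → ℤ) (t : ℤ) :
    ∑ i, |Fin.snoc y t i| = (∑ i, |y i|) + |t| := by
  rw [Fin.sum_univ_castSucc]
  simp [Fin.snoc_castSucc, Fin.snoc_last]

lemma sum_abs_split {k : ℕ} (x : Fin (k + 1) → ℤ) :
    ∑ i, |x i| = (∑ i : Fin k, |x i.castSucc|) + |x (Fin.last k)| :=
  Fin.sum_univ_castSucc _

lemma sum_abs_update {k : ℕ} (x : Fin (k + 1) → ℤ) (v : ℤ) :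
    ∑ i, |Function.update x (Fin.last k) v i|
      = (∑ i : Fin k, |x i.castSucc|) + |v| := by
  rw [Fin.sum_univ_castSucc]
  simp only [Function.update_self]
  congr 1
  refine Finset.sum_congr rfl fun i _ => ?_
  rw [Function.update_of_ne (Fin.castSucc_lt_last i).ne]

lemma e1 (k q : ℕ) : ((D (k + 1) (q + 1)).filter fun x => x (Fin.last k) = 0).card = (D k (q + 1)).card := by
  refine Finset.card_bij' (fun x _ => Fin.init x) (fun y _ => Fin.snoc y 0)
    ?_ ?_ ?_ ?_
  · intro x hx
    obtain ⟨hxs, hx0⟩ := Finset.mem_filter.1 hx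
    have := mem_D.1 hxs
    rw [sum_abs_split x, hx0] at this
    exact mem_D.2 (by simpa [Fin.init] using this)
  · intro y hy
    refine Finset.mem_filter.2 ⟨mem_D.2 ?_, by simp⟩
    rw [sum_abs_snoc]
    have := mem_D.1 hy
    push_cast
    push_cast at this
    simpa using this
  · intro x hx
    obtain ⟨_, hx0⟩ := Finset.mem_filter.1 hx
    have h := Fin.snoc_init_self x
    rw [hx0] at h
    exact h
  · intro y _; exact Fin.init_snoc _ _

lemma e2 (k q : ℕ) : (((D (k + 1) (q + 1)).filter fun x => ¬ x (Fin.last k) = 0).filter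
      fun x => x (Fin.last k) = -1).card = (D k q).card := by
  refine Finset.card_bij' (fun x _ => Fin.init x) (fun y _ => Fin.snoc y (-1))
    ?_ ?_ ?_ ?_
  · intro x hx
    obtain ⟨hxs, hx1⟩ := Finset.mem_filter.1 hx
    obtain ⟨hxs, _⟩ := Finset.mem_filter.1 hxs
    have := mem_D.1 hxs
    rw [sum_abs_split x, hx1] at this
    refine mem_D.2 ?_
    have : (∑ i : Fin k, |x i.castSucc|) + 1 ≤ (q : ℤ) + 1 := by
      simp only [abs_neg, abs_one] at this; push_cast at this ⊢; linarith
    simpa [Fin.init] using this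
  · intro y hy
    refine Finset.mem_filter.2 ⟨Finset.mem_filter.2 ⟨mem_D.2 ?_, by simp⟩, by simp⟩
    rw [sum_abs_snoc]
    have := mem_D.1 hy
    simp only [abs_neg, abs_one]
    push_cast; push_cast at this; linarith
  · intro x hx
    obtain ⟨_, hx1⟩ := Finset.mem_filter.1 hx
    have h := Fin.snoc_init_self x
    rw [hx1] at h
    exact h
  · intro y _; exact Fin.init_snoc _ _

lemma e3 (k q : ℕ) : (((D (k + 1) (q + 1)).filter fun x => ¬ x (Fin.last k) = 0).filter
      fun x => ¬ x (Fin.last k) = -1).card = (D (k + 1) q).card := by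
  refine Finset.card_bij'
    (fun x _ => Function.update x (Fin.last k)
      (if 0 < x (Fin.last k) then x (Fin.last k) - 1 else x (Fin.last k) + 1))
    (fun y _ => Function.update y (Fin.last k)
      (if 0 ≤ y (Fin.last k) then y (Fin.last k) + 1 else y (Fin.last k) - 1))
    ?_ ?_ ?_ ?_
  · intro x hx
    beta_reduce
    obtain ⟨hxs, hx1⟩ := Finset.mem_filter.1 hx
    obtain ⟨hxs, hx0⟩ := Finset.mem_filter.1 hxs
    have hsum := mem_D.1 hxs
    rw [sum_abs_split x] at hsum
    refine mem_D.2 ?_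
    rw [sum_abs_update]
    set t := x (Fin.last k) with ht
    clear_value t
    have habs : |if 0 < t then t - 1 else t + 1| = |t| - 1 := by
      rcases lt_trichotomy t 0 with h | h | h
      · rw [if_neg (show ¬ 0 < t by omega), abs_of_nonpos (show t + 1 ≤ 0 by omega),
          abs_of_neg h]
        ring
      · exact absurd h hx0
      · rw [if_pos h, abs_of_nonneg (show 0 ≤ t - 1 by omega), abs_of_pos h]
    rw [habs]
    push_cast at hsum ⊢
    have h1t : 1 ≤ |t| := by
      rcases lt_trichotomy t 0 with h | h | h
      · rw [abs_of_neg h]; omega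
      · exact absurd h hx0
      · rw [abs_of_pos h]; omega
    linarith
  · intro y hy
    beta_reduce
    have hsum := mem_D.1 hy
    rw [sum_abs_split y] at hsum
    set u := y (Fin.last k) with hu
    clear_value u
    refine Finset.mem_filter.2 ⟨Finset.mem_filter.2 ⟨mem_D.2 ?_, ?_⟩, ?_⟩
    · rw [sum_abs_update]
      have habs : |if 0 ≤ u then u + 1 else u - 1| = |u| + 1 := by
        by_cases h : 0 ≤ u
        · rw [if_pos h, abs_of_nonneg (show 0 ≤ u + 1 by omega), abs_of_nonneg h]
        · rw [if_neg h, abs_of_nonpos (show u - 1 ≤ 0 by omega),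
            abs_of_nonpos (le_of_not_ge h)]
          ring
      rw [habs]
      push_cast at hsum ⊢
      linarith
    · simp only [Function.update_self]
      split_ifs with h <;> omega
    · simp only [Function.update_self]
      split_ifs with h <;> omega
  · intro x hx
    beta_reduce
    obtain ⟨hxs, hx1⟩ := Finset.mem_filter.1 hx
    obtain ⟨_, hx0⟩ := Finset.mem_filter.1 hxs
    funext i
    by_cases hi : i = Fin.last k
    · subst hi
      simp only [Function.update_self]
      set t := x (Fin.last k) with ht
      clear_value t
      split_ifs <;> omega
    · simp [Function.update_of_ne hi]
  · intro y hy
    beta_reduce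
    funext i
    by_cases hi : i = Fin.last k
    · subst hi
      simp only [Function.update_self]
      set u := y (Fin.last k) with hu
      clear_value u
      split_ifs <;> omega
    · simp [Function.update_of_ne hi]

lemma key_s4 (k q : ℕ) :
    latticeBall (k + 1) (q + 1)
      = latticeBall (k + 1) q + latticeBall k (q + 1) + latticeBall k q := by
  simp only [latticeBall_eq]
  classical
  have s_def : True := trivial
  have h1 : ((D (k + 1) (q + 1)).filter fun x => x (Fin.last k) = 0).card
      + ((D (k + 1) (q + 1)).filter fun x => ¬ x (Fin.last k) = 0).card = (D (k + 1) (q + 1)).card :=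
    Finset.card_filter_add_card_filter_not _
  have h2 : (((D (k + 1) (q + 1)).filter fun x => ¬ x (Fin.last k) = 0).filter
        fun x => x (Fin.last k) = -1).card
      + (((D (k + 1) (q + 1)).filter fun x => ¬ x (Fin.last k) = 0).filter
        fun x => ¬ x (Fin.last k) = -1).card
      = ((D (k + 1) (q + 1)).filter fun x => ¬ x (Fin.last k) = 0).card :=
    Finset.card_filter_add_card_filter_not _
  rw [← h1, ← h2, e1 k q, e2 k q, e3 k q]
  ring

lemma latticeBall_zero_left (p : ℕ) : latticeBall 0 p = 1 := by
  have : {x : Fin 0 → ℤ | ∑ i, |x i| ≤ (p : ℤ)} = Set.univ := by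
    ext x; simp
  rw [latticeBall, this, Set.ncard_univ, Nat.card_unique]

lemma latticeBall_zero_right (k : ℕ) : latticeBall k 0 = 1 := by
  have : {x : Fin k → ℤ | ∑ i, |x i| ≤ ((0 : ℕ) : ℤ)} = {fun _ => 0} := by
    ext x
    simp only [Set.mem_setOf_eq, Set.mem_singleton_iff, Nat.cast_zero]
    constructor
    · intro h
      funext i
      have h0 : ∑ i, |x i| = 0 :=
        le_antisymm h (Finset.sum_nonneg fun i _ => abs_nonneg _)
      have := (Finset.sum_eq_zero_iff_of_nonneg fun i _ => abs_nonneg (x i)).1 h0 i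
        (Finset.mem_univ i)
      simpa using this
    · intro h; subst h; simp
  rw [latticeBall, this, Set.ncard_singleton]

open PowerSeries in
lemma step (k : ℕ) :
    (1 - (X : ℤ⟦X⟧)) * PowerSeries.mk (fun p => (latticeBall (k + 1) p : ℤ))
      = (1 + (X : ℤ⟦X⟧)) * PowerSeries.mk (fun p => (latticeBall k p : ℤ)) := by
  ext n
  rw [sub_mul, add_mul, one_mul, one_mul, map_sub, map_add]
  cases n with
  | zero =>
    simp [PowerSeries.coeff_zero_X_mul, PowerSeries.coeff_mk,
      latticeBall_zero_right]
  | succ n =>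
    rw [PowerSeries.coeff_succ_X_mul, PowerSeries.coeff_succ_X_mul]
    simp only [PowerSeries.coeff_mk]
    have := key_s4 k n
    push_cast [this]
    ring

end LatticeBallAux

/-- For every `k ≥ 0`, in `ℤ⟦X⟧` one has
`(1 − X)^{k+1} · ∑_{p≥0} f(k,p) Xᵖ = (1 + X)^k`, i.e. the generating function of the
lattice-point counts of closed L¹-balls in `ℤ^k` is `(1+X)^k/(1−X)^{k+1}`. -/
theorem latticeBall_genFun (k : ℕ) :
    (1 - (PowerSeries.X : PowerSeries ℤ)) ^ (k + 1) *
        PowerSeries.mk (fun p => (latticeBall k p : ℤ)) =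
      (1 + (PowerSeries.X : PowerSeries ℤ)) ^ k := by
  induction k with
  | zero =>
    rw [pow_one, pow_zero]
    have h : (fun p => ((latticeBall 0 p : ℕ) : ℤ)) = fun _ => (1 : ℤ) := by
      funext p; rw [LatticeBallAux.latticeBall_zero_left]; norm_num
    rw [h]
    ext n
    cases n with
    | zero => simp [sub_mul, PowerSeries.coeff_zero_X_mul, PowerSeries.coeff_mk]
    | succ n =>
      rw [sub_mul, one_mul, map_sub, PowerSeries.coeff_succ_X_mul]
      simp [PowerSeries.coeff_mk, PowerSeries.coeff_one]
  | succ k ih =>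
    have : (1 - (PowerSeries.X : PowerSeries ℤ)) ^ (k + 1 + 1) *
        PowerSeries.mk (fun p => (latticeBall (k + 1) p : ℤ))
        = (1 - PowerSeries.X) ^ (k + 1) *
          ((1 - PowerSeries.X) * PowerSeries.mk (fun p => (latticeBall (k + 1) p : ℤ))) := by
      ring
    rw [this, LatticeBallAux.step k, show (1 - (PowerSeries.X : PowerSeries ℤ)) ^ (k + 1) *
        ((1 + PowerSeries.X) * PowerSeries.mk (fun p => (latticeBall k p : ℤ)))
        = (1 + PowerSeries.X) * ((1 - PowerSeries.X) ^ (k + 1) *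
          PowerSeries.mk (fun p => (latticeBall k p : ℤ))) from by ring, ih]
    ring
end

section
/- For all integers 1 ≤ k ≤ k' and p ≥ 0, there exists a finite set S ⊆ ℤ^{k'} such that the subgraph of the k'-dimensional mesh induced on S is connected, every vertex of S has at most 2k neighbors in S, any two vertices of S are at graph distance at most 2p in the induced subgraph, and |S| = f(k,p), the number of lattice points in the closed L¹-ball of radius p in ℤ^k. (In particular, the induced subgraph on the ball B_k(p) itself, embedded in the first k coordinates, has these properties.) -/
/-- The `k`-dimensional mesh: the simple graph on `ℤ^k` where two points are adjacent
iff they are at L¹-distance exactly `1`. -/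
def mesh (k : ℕ) : SimpleGraph (Fin k → ℤ) where
  Adj x y := ∑ i, |x i - y i| = 1
  symm := by
    refine ⟨?_⟩
    intro x y h
    have e : ∀ i ∈ Finset.univ, |y i - x i| = |x i - y i| := fun i _ => abs_sub_comm _ _
    rw [Finset.sum_congr rfl e]
    exact h
  loopless := by
    refine ⟨?_⟩
    intro x h
    simp at h

lemma mesh_adj_struct {k : ℕ} {x y : Fin k → ℤ} (h : (mesh k).Adj x y) :
    ∃ j, |x j - y j| = 1 ∧ ∀ i, i ≠ j → x i = y i := by
  have hsum : ∑ i, |x i - y i| = 1 := h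
  obtain ⟨j, -, hj⟩ := Finset.exists_ne_zero_of_sum_ne_zero (by rw [hsum]; norm_num)
  have hsplit : |x j - y j| + ∑ i ∈ Finset.univ.erase j, |x i - y i| = 1 := by
    rw [← hsum]; exact Finset.add_sum_erase _ (fun i => |x i - y i|) (Finset.mem_univ j)
  have hrest0 : (0:ℤ) ≤ ∑ i ∈ Finset.univ.erase j, |x i - y i| :=
    Finset.sum_nonneg (fun i _ => abs_nonneg _)
  have hjge : (1:ℤ) ≤ |x j - y j| := by
    have := abs_nonneg (x j - y j); omega
  have hrest : ∑ i ∈ Finset.univ.erase j, |x i - y i| = 0 := by omega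
  refine ⟨j, by omega, fun i hi => ?_⟩
  have h0 := (Finset.sum_eq_zero_iff_of_nonneg (fun i _ => abs_nonneg _)).1 hrest i
    (Finset.mem_erase.2 ⟨hi, Finset.mem_univ i⟩)
  have : x i - y i = 0 := abs_eq_zero.1 h0
  omega

def extFun (k k' : ℕ) (x : Fin k → ℤ) : Fin k' → ℤ :=
  fun i => if h : (i : ℕ) < k then x ⟨i, h⟩ else 0

lemma sum_abs_ext {k k' : ℕ} (hkk' : k ≤ k') (x : Fin k → ℤ) :
    ∑ i, |extFun k k' x i| = ∑ j, |x j| := by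
  rw [← Finset.sum_subset
      (Finset.subset_univ ((Finset.univ : Finset (Fin k)).map (Fin.castLEEmb hkk')))
      ?_]
  · rw [Finset.sum_map]
    refine Finset.sum_congr rfl fun j _ => ?_
    simp [extFun, Fin.castLEEmb, Fin.castLE, j.isLt]
  · intro i _ hi
    have hik : ¬ (i:ℕ) < k := by
      intro h
      exact hi (Finset.mem_map.2 ⟨⟨i, h⟩, Finset.mem_univ _, Fin.ext rfl⟩)
    simp [extFun, hik]

lemma extFun_injective {k k' : ℕ} (hkk' : k ≤ k') :
    Function.Injective (extFun k k') := by
  intro x y h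
  funext j
  have := congrFun h (Fin.castLE hkk' j)
  simpa [extFun, Fin.castLE, j.isLt] using this

def ballSet (k k' p : ℕ) : Set (Fin k' → ℤ) :=
  {y | (∀ i : Fin k', k ≤ (i:ℕ) → y i = 0) ∧ ∑ i, |y i| ≤ (p:ℤ)}

lemma zero_mem_ballSet {k k' p : ℕ} : (0 : Fin k' → ℤ) ∈ ballSet k k' p := by
  constructor
  · intro i _; rfl
  · simp

lemma ballSet_eq_image {k k' : ℕ} (p : ℕ) (hkk' : k ≤ k') :
    ballSet k k' p = extFun k k' '' {x : Fin k → ℤ | ∑ i, |x i| ≤ (p:ℤ)} := by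
  ext y
  constructor
  · rintro ⟨h0, hsum⟩
    refine ⟨fun j => y (Fin.castLE hkk' j), ?_, ?_⟩
    · have : extFun k k' (fun j => y (Fin.castLE hkk' j)) = y := by
        funext i
        by_cases h : (i:ℕ) < k
        · simp only [extFun, dif_pos h]
          congr 1
        · simp only [extFun, dif_neg h]
          exact (h0 i (not_lt.1 h)).symm
      rw [Set.mem_setOf_eq, ← sum_abs_ext hkk' (fun j => y (Fin.castLE hkk' j)), this]
      exact hsum
    · funext i
      by_cases h : (i:ℕ) < k
      · simp only [extFun, dif_pos h]
        congr 1
      · simp only [extFun, dif_neg h]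
        exact (h0 i (not_lt.1 h)).symm
  · rintro ⟨x, hx, rfl⟩
    constructor
    · intro i hi
      simp [extFun, not_lt.2 hi]
    · rw [show (∑ i, |extFun k k' x i|) = ∑ j, |x j| from sum_abs_ext hkk' x]
      exact hx

lemma walk_to_zero {k k' p : ℕ} (hkk' : k ≤ k') :
    ∀ n : ℕ, ∀ y : Fin k' → ℤ, ∀ hy : y ∈ ballSet k k' p, (∑ i, |y i|).toNat = n →
    ∃ w : ((mesh k').induce (ballSet k k' p)).Walk ⟨y, hy⟩ ⟨0, zero_mem_ballSet⟩,
      w.length = n := by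
  intro n
  induction n with
  | zero =>
    intro y hy hn
    have hnn : (0:ℤ) ≤ ∑ i, |y i| := Finset.sum_nonneg fun i _ => abs_nonneg _
    have hs0 : ∑ i, |y i| = 0 := by omega
    have hy0 : y = 0 := by
      funext i
      have := (Finset.sum_eq_zero_iff_of_nonneg (fun i _ => abs_nonneg _)).1 hs0 i
        (Finset.mem_univ i)
      simpa using abs_eq_zero.1 this
    have heq : (⟨y, hy⟩ : ballSet k k' p) = ⟨0, zero_mem_ballSet⟩ := Subtype.ext hy0
    exact ⟨SimpleGraph.Walk.nil.copy heq.symm rfl, by simp⟩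
  | succ n ih =>
    intro y hy hn
    have hnn : (0:ℤ) ≤ ∑ i, |y i| := Finset.sum_nonneg fun i _ => abs_nonneg _
    have hsy : ∑ i, |y i| = (n:ℤ) + 1 := by omega
    obtain ⟨i, -, hi⟩ := Finset.exists_ne_zero_of_sum_ne_zero (by rw [hsy]; positivity)
    have hyi : y i ≠ 0 := fun h => hi (by simp [h])
    set sgn : ℤ := if 0 < y i then 1 else -1 with hsgn
    set z : Fin k' → ℤ := Function.update y i (y i - sgn) with hz
    have key : |y i - sgn| = |y i| - 1 := by
      rw [hsgn]
      rcases lt_or_ge 0 (y i) with h | h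
      · rw [if_pos h, abs_of_pos h, abs_of_nonneg (by omega)]
      · rw [if_neg (not_lt.2 h), abs_of_neg (lt_of_le_of_ne h hyi), sub_neg_eq_add,
          abs_of_nonpos (by omega)]
        ring
    have hzsum : ∑ j, |z j| = (∑ j, |y j|) - 1 := by
      have e1 : ∑ j, |z j| = |z i| + ∑ j ∈ Finset.univ.erase i, |z j| := by
        rw [← hsy] at *
        exact (Finset.add_sum_erase _ (fun j => |z j|) (Finset.mem_univ i)).symm
      have e2 : ∑ j, |y j| = |y i| + ∑ j ∈ Finset.univ.erase i, |y j| :=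
        (Finset.add_sum_erase _ (fun j => |y j|) (Finset.mem_univ i)).symm
      have e3 : ∑ j ∈ Finset.univ.erase i, |z j| = ∑ j ∈ Finset.univ.erase i, |y j| := by
        refine Finset.sum_congr rfl fun j hj => ?_
        rw [hz, Function.update_of_ne (Finset.mem_erase.1 hj).1]
      have e4 : z i = y i - sgn := by rw [hz, Function.update_self]
      rw [e1, e2, e3, e4, key]; ring
    have hzmem : z ∈ ballSet k k' p := by
      constructor
      · intro j hj
        have hji : j ≠ i := by
          rintro rfl
          exact hyi (hy.1 j hj)
        rw [hz, Function.update_of_ne hji]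
        exact hy.1 j hj
      · rw [hzsum]
        have := hy.2
        omega
    have hadj : (mesh k').Adj y z := by
      show ∑ j, |y j - z j| = 1
      rw [Finset.sum_eq_single_of_mem i (Finset.mem_univ i)
        (fun j _ hj => by rw [hz, Function.update_of_ne hj]; simp)]
      rw [hz, Function.update_self]
      have : y i - (y i - sgn) = sgn := by ring
      rw [this, hsgn]
      split_ifs <;> simp
    have hzn : (∑ j, |z j|).toNat = n := by
      rw [hzsum, hsy]; simp
    obtain ⟨w, hw⟩ := ih z hzmem hzn
    have hadj' : ((mesh k').induce (ballSet k k' p)).Adj ⟨y, hy⟩ ⟨z, hzmem⟩ := hadj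
    exact ⟨SimpleGraph.Walk.cons hadj' w, by rw [SimpleGraph.Walk.length_cons, hw]⟩

/-- For all `1 ≤ k ≤ k'` and `p ≥ 0`, there is a finite set `S ⊆ ℤ^{k'}`
inducing a connected subgraph of the `k'`-dimensional mesh, in which every vertex has at
most `2k` neighbors, any two vertices are at graph distance at most `2p`, and `|S| = f(k,p)`. -/
theorem exists_subgraph_of_ball (k k' p : ℕ) (hk : 1 ≤ k) (hkk' : k ≤ k') :
    ∃ S : Set (Fin k' → ℤ), S.Finite ∧
      ((mesh k').induce S).Connected ∧
      (∀ x ∈ S, {y | y ∈ S ∧ (mesh k').Adj x y}.ncard ≤ 2 * k) ∧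
      (∀ x, ∀ hx : x ∈ S, ∀ y, ∀ hy : y ∈ S,
        ((mesh k').induce S).dist ⟨x, hx⟩ ⟨y, hy⟩ ≤ 2 * p) ∧
      S.ncard = latticeBall k p := by
  classical
  have hconn : ((mesh k').induce (ballSet k k' p)).Connected := by
    have hpre : ((mesh k').induce (ballSet k k' p)).Preconnected := by
      intro a b
      obtain ⟨wa, -⟩ := walk_to_zero (p := p) hkk' _ a.1 a.2 rfl
      obtain ⟨wb, -⟩ := walk_to_zero (p := p) hkk' _ b.1 b.2 rfl
      exact wa.reachable.trans wb.reachable.symm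
    haveI : Nonempty ↑(ballSet k k' p) := ⟨⟨0, zero_mem_ballSet⟩⟩
    exact ⟨hpre⟩
  refine ⟨ballSet k k' p, ?_, hconn, ?_, ?_, ?_⟩
  · -- Finite
    rw [ballSet_eq_image p hkk']
    apply Set.Finite.image
    apply Set.Finite.subset (Set.finite_Icc (fun _ : Fin k => -(p:ℤ)) (fun _ => (p:ℤ)))
    intro x hx
    have hc : ∀ i, |x i| ≤ (p:ℤ) := fun i =>
      le_trans (Finset.single_le_sum (fun j _ => abs_nonneg (x j)) (Finset.mem_univ i)) hx
    refine Set.mem_Icc.2 ⟨fun i => ?_, fun i => ?_⟩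
    · exact (abs_le.1 (hc i)).1
    · exact (abs_le.1 (hc i)).2
  · -- degree bound
    intro x hx
    set F : Fin k × Bool → (Fin k' → ℤ) := fun q =>
      Function.update x (Fin.castLE hkk' q.1)
        (x (Fin.castLE hkk' q.1) + if q.2 then 1 else -1) with hF
    have hsub : {y | y ∈ ballSet k k' p ∧ (mesh k').Adj x y} ⊆ Set.range F := by
      rintro y ⟨hyS, hadj⟩
      obtain ⟨j, hj1, hj2⟩ := mesh_adj_struct hadj
      have hjk : (j:ℕ) < k := by
        by_contra h
        have hx0 : x j = 0 := hx.1 j (not_lt.1 h)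
        have hy0 : y j = 0 := hyS.1 j (not_lt.1 h)
        rw [hx0, hy0] at hj1; simp at hj1
      have hcast : Fin.castLE hkk' ⟨(j:ℕ), hjk⟩ = j := Fin.ext rfl
      have hcase : x j - y j = 1 ∨ x j - y j = -1 := ((abs_eq (by norm_num)).1 hj1)
      rcases hcase with h | h
      · refine ⟨(⟨(j:ℕ), hjk⟩, false), ?_⟩
        funext i
        simp only [hF]
        rw [hcast]
        by_cases hij : i = j
        · subst hij
          rw [Function.update_self, if_neg (by decide : ¬((false:Bool) = true))]
          omega
        · rw [Function.update_of_ne hij]; exact hj2 i hij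
      · refine ⟨(⟨(j:ℕ), hjk⟩, true), ?_⟩
        funext i
        simp only [hF]
        rw [hcast]
        by_cases hij : i = j
        · subst hij
          rw [Function.update_self, if_pos trivial]
          omega
        · rw [Function.update_of_ne hij]; exact hj2 i hij
    have hcard : Nat.card (Fin k × Bool) = 2 * k := by
      simp [Nat.card_eq_fintype_card]; ring
    calc {y | y ∈ ballSet k k' p ∧ (mesh k').Adj x y}.ncard
        ≤ (Set.range F).ncard := Set.ncard_le_ncard hsub (Set.finite_range F)
      _ ≤ 2 * k := by
          rw [← Set.image_univ]
          refine le_trans (Set.ncard_image_le Set.finite_univ) ?_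
          rw [Set.ncard_univ, hcard]
  · -- distance bound
    intro x hx y hy
    obtain ⟨wx, hwx⟩ := walk_to_zero (p := p) hkk' _ x hx rfl
    obtain ⟨wy, hwy⟩ := walk_to_zero (p := p) hkk' _ y hy rfl
    have dx : ((mesh k').induce (ballSet k k' p)).dist ⟨x, hx⟩ ⟨0, zero_mem_ballSet⟩ ≤ p :=
      le_trans (SimpleGraph.dist_le wx) (by rw [hwx]; exact Int.toNat_le.2 hx.2)
    have dy : ((mesh k').induce (ballSet k k' p)).dist ⟨y, hy⟩ ⟨0, zero_mem_ballSet⟩ ≤ p :=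
      le_trans (SimpleGraph.dist_le wy) (by rw [hwy]; exact Int.toNat_le.2 hy.2)
    calc ((mesh k').induce (ballSet k k' p)).dist ⟨x, hx⟩ ⟨y, hy⟩
        ≤ ((mesh k').induce (ballSet k k' p)).dist ⟨x, hx⟩ ⟨0, zero_mem_ballSet⟩
          + ((mesh k').induce (ballSet k k' p)).dist ⟨0, zero_mem_ballSet⟩ ⟨y, hy⟩ :=
          hconn.dist_triangle
      _ = ((mesh k').induce (ballSet k k' p)).dist ⟨x, hx⟩ ⟨0, zero_mem_ballSet⟩
          + ((mesh k').induce (ballSet k k' p)).dist ⟨y, hy⟩ ⟨0, zero_mem_ballSet⟩ := by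
          congr 1
          exact SimpleGraph.dist_comm
      _ ≤ p + p := add_le_add dx dy
      _ = 2 * p := by ring
  · -- cardinality
    rw [ballSet_eq_image p hkk', Set.ncard_image_of_injective _ (extFun_injective hkk')]
    rfl
end
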